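/- Each component R_i = Σⱼ pⱼ(qⱼpᵢ − qᵢpⱼ) + (qᵢ/|q|)(ηH + k) of the deformed Runge–Lenz vector Poisson-commutes with the Hamiltonian H = |q|·p²/(2(η+|q|)) − k/(η+|q|): {H, R_i} = 0 on ℝᴺ∖{0} × ℝᴺ. -/

import Mathlib

open Filter

/-- Euclidean norm of a point of ℝᴺ. -/
noncomputable def nrm {N : ℕ} (q : Fin N → ℝ) : ℝ := Real.sqrt (∑ i, q i ^ 2)

/-- The canonical Poisson bracket {F,G} = Σᵢ (∂F/∂qᵢ ∂G/∂pᵢ − ∂F/∂pᵢ ∂G/∂qᵢ)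
on phase space ℝᴺ × ℝᴺ, evaluated at a point `x = (q,p)`. -/
noncomputable def pbracket {N : ℕ}
    (F G : (Fin N → ℝ) × (Fin N → ℝ) → ℝ)
    (x : (Fin N → ℝ) × (Fin N → ℝ)) : ℝ :=
  ∑ i : Fin N,
    (deriv (fun t => F (Function.update x.1 i t, x.2)) (x.1 i) *
       deriv (fun t => G (x.1, Function.update x.2 i t)) (x.2 i) -
     deriv (fun t => F (x.1, Function.update x.2 i t)) (x.2 i) *
       deriv (fun t => G (Function.update x.1 i t, x.2)) (x.1 i))

/-- Angular momentum component J_{ij} = qᵢ pⱼ − qⱼ pᵢ. -/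
def J {N : ℕ} (i j : Fin N) (x : (Fin N → ℝ) × (Fin N → ℝ)) : ℝ :=
  x.1 i * x.2 j - x.1 j * x.2 i

/-- The deformed Coulomb Hamiltonian H = |q| p² / (2(η+|q|)) − k/(η+|q|). -/
noncomputable def Ham {N : ℕ} (η k : ℝ)
    (x : (Fin N → ℝ) × (Fin N → ℝ)) : ℝ :=
  nrm x.1 * (∑ i, x.2 i ^ 2) / (2 * (η + nrm x.1)) - k / (η + nrm x.1)

/-- The i-th component of the deformed Runge–Lenz vector. -/
noncomputable def RL {N : ℕ} (η k : ℝ) (i : Fin N)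
    (x : (Fin N → ℝ) × (Fin N → ℝ)) : ℝ :=
  (∑ j, x.2 j * (x.1 j * x.2 i - x.1 i * x.2 j)) +
    x.1 i / nrm x.1 * (η * Ham η k x + k)

/- ### Auxiliary lemmas -/

lemma sum_update_sq {N : ℕ} (q : Fin N → ℝ) (i : Fin N) (t : ℝ) :
    ∑ j, (Function.update q i t) j ^ 2 = t ^ 2 + (∑ j, q j ^ 2 - q i ^ 2) := by
  have h : ∀ j, (Function.update q i t) j ^ 2
      = Function.update (fun j => q j ^ 2) i (t ^ 2) j := by
    intro j; by_cases hj : j = i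
    · subst hj; simp
    · simp [Function.update_of_ne hj]
  rw [Finset.sum_congr rfl (fun j _ => h j), Finset.sum_update_of_mem (Finset.mem_univ i)]
  rw [← Finset.sum_erase_add Finset.univ _ (Finset.mem_univ i)]
  simp [Finset.sdiff_singleton_eq_erase]

lemma sum_update_mul {N : ℕ} (q p : Fin N → ℝ) (i : Fin N) (t : ℝ) :
    ∑ j, (Function.update q i t) j * p j = t * p i + (∑ j, q j * p j - q i * p i) := by
  have h : ∀ j, (Function.update q i t) j * p j
      = Function.update (fun j => q j * p j) i (t * p i) j := by
    intro j; by_cases hj : j = i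
    · subst hj; simp
    · simp [Function.update_of_ne hj]
  rw [Finset.sum_congr rfl (fun j _ => h j), Finset.sum_update_of_mem (Finset.mem_univ i)]
  rw [← Finset.sum_erase_add Finset.univ _ (Finset.mem_univ i)]
  simp [Finset.sdiff_singleton_eq_erase]

lemma sum_mul_update {N : ℕ} (q p : Fin N → ℝ) (i : Fin N) (t : ℝ) :
    ∑ j, q j * (Function.update p i t) j = t * q i + (∑ j, q j * p j - q i * p i) := by
  have h : ∀ j, q j * (Function.update p i t) j = (Function.update p i t) j * q j :=
    fun j => mul_comm _ _
  rw [Finset.sum_congr rfl (fun j _ => h j), sum_update_mul]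
  have h2 : ∑ j, p j * q j = ∑ j, q j * p j := Finset.sum_congr rfl fun j _ => mul_comm _ _
  rw [h2]
  ring

lemma sumsq_pos {N : ℕ} {q : Fin N → ℝ} (hq : q ≠ 0) : 0 < ∑ j, q j ^ 2 := by
  obtain ⟨j, hj⟩ := Function.ne_iff.mp hq
  have hj' : q j ≠ 0 := by simpa using hj
  exact Finset.sum_pos' (fun _ _ => sq_nonneg _) ⟨j, Finset.mem_univ j, by positivity⟩

lemma nrm_pos {N : ℕ} {q : Fin N → ℝ} (hq : q ≠ 0) : 0 < nrm q :=
  Real.sqrt_pos.mpr (sumsq_pos hq)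

lemma sq_nrm {N : ℕ} (q : Fin N → ℝ) : nrm q ^ 2 = ∑ j, q j ^ 2 :=
  Real.sq_sqrt (Finset.sum_nonneg fun _ _ => sq_nonneg _)

lemma hasDerivAt_nrm_update {N : ℕ} {q : Fin N → ℝ} (hq : q ≠ 0) (i : Fin N) :
    HasDerivAt (fun t => nrm (Function.update q i t)) (q i / nrm q) (q i) := by
  set c := ∑ j, q j ^ 2 - q i ^ 2 with hc
  have hfun : (fun t => nrm (Function.update q i t)) = fun t => Real.sqrt (t ^ 2 + c) := by
    funext t; rw [nrm, sum_update_sq]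
  have hS : q i ^ 2 + c ≠ 0 := by
    rw [hc]; have := sumsq_pos hq; intro h
    rw [show q i ^ 2 + (∑ j, q j ^ 2 - q i ^ 2) = ∑ j, q j ^ 2 by ring] at h; linarith
  have h1 : HasDerivAt (fun t : ℝ => t ^ 2 + c) (2 * q i) (q i) := by
    simpa using (hasDerivAt_pow 2 (q i)).add_const c
  have h2 := (Real.hasDerivAt_sqrt hS).comp (q i) h1
  rw [hfun]
  refine h2.congr_deriv ?_
  rw [nrm, show q i ^ 2 + c = ∑ j, q j ^ 2 by rw [hc]; ring]
  have hr := nrm_pos hq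
  rw [nrm] at hr
  field_simp

lemma hasDerivAt_Ham_q {N : ℕ} (η k : ℝ) {q : Fin N → ℝ} (p : Fin N → ℝ)
    (hq : q ≠ 0) (hs : η + nrm q ≠ 0) (j : Fin N) :
    HasDerivAt (fun t => Ham η k (Function.update q j t, p))
      (q j * (η * (∑ m, p m ^ 2) + 2 * k) / (2 * nrm q * (η + nrm q) ^ 2)) (q j) := by
  have hr := (nrm_pos hq).ne'
  set A := ∑ m, p m ^ 2 with hA
  have hN := hasDerivAt_nrm_update hq j
  have hNval : nrm (Function.update q j (q j)) = nrm q := by rw [Function.update_eq_self]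
  have h1 : HasDerivAt (fun t => nrm (Function.update q j t) * A) (q j / nrm q * A) (q j) :=
    hN.mul_const A
  have h2 : HasDerivAt (fun t => 2 * (η + nrm (Function.update q j t)))
      (2 * (q j / nrm q)) (q j) := (hN.const_add η).const_mul 2
  have h3 : HasDerivAt (fun t => η + nrm (Function.update q j t)) (q j / nrm q) (q j) :=
    hN.const_add η
  have hden : (fun t => 2 * (η + nrm (Function.update q j t))) (q j) ≠ 0 := by
    simp only [hNval]; intro h; apply hs; linarith [h]
  have hden' : (fun t => η + nrm (Function.update q j t)) (q j) ≠ 0 := by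
    simp only [hNval]; exact hs
  have hd1 := h1.div h2 hden
  have hd2 := (hasDerivAt_const (q j) k).div h3 hden'
  have htot := hd1.sub hd2
  simp only [hNval] at htot
  have hgoal : HasDerivAt (fun t => nrm (Function.update q j t) * A /
      (2 * (η + nrm (Function.update q j t))) - k / (η + nrm (Function.update q j t)))
      (q j * (η * A + 2 * k) / (2 * nrm q * (η + nrm q) ^ 2)) (q j) := by
    refine htot.congr_deriv ?_
    field_simp
    ring
  exact hgoal.congr_of_eventuallyEq (by filter_upwards with t; simp [Ham, hA])

lemma hasDerivAt_Ham_p {N : ℕ} (η k : ℝ) (q p : Fin N → ℝ)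
    (hs : η + nrm q ≠ 0) (j : Fin N) :
    HasDerivAt (fun t => Ham η k (q, Function.update p j t))
      (nrm q * p j / (η + nrm q)) (p j) := by
  have hfun : (fun t => Ham η k (q, Function.update p j t))
      = fun t => nrm q * (t ^ 2 + (∑ m, p m ^ 2 - p j ^ 2)) / (2 * (η + nrm q))
          - k / (η + nrm q) := by
    funext t; rw [Ham, sum_update_sq]
  rw [hfun]
  have h1 : HasDerivAt (fun t : ℝ => t ^ 2 + (∑ m, p m ^ 2 - p j ^ 2)) (2 * p j) (p j) := by
    simpa using (hasDerivAt_pow 2 (p j)).add_const (∑ m, p m ^ 2 - p j ^ 2)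
  have := ((h1.const_mul (nrm q)).div_const (2 * (η + nrm q))).sub_const (k / (η + nrm q))
  refine this.congr_deriv ?_
  field_simp

lemma RL_eq {N : ℕ} (η k : ℝ) (i : Fin N) (x : (Fin N → ℝ) × (Fin N → ℝ)) :
    RL η k i x = (∑ j, x.1 j * x.2 j) * x.2 i - x.1 i * (∑ j, x.2 j ^ 2) +
      x.1 i / nrm x.1 * (η * Ham η k x + k) := by
  rw [RL]
  congr 1
  have h : ∀ j : Fin N, x.2 j * (x.1 j * x.2 i - x.1 i * x.2 j)
      = (x.1 j * x.2 j) * x.2 i - x.1 i * x.2 j ^ 2 := fun j => by ring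
  rw [Finset.sum_congr rfl fun j _ => h j, Finset.sum_sub_distrib, ← Finset.sum_mul,
    ← Finset.mul_sum]

lemma hasDerivAt_RL_p {N : ℕ} (η k : ℝ) (i : Fin N) {q : Fin N → ℝ} (p : Fin N → ℝ)
    (hq : q ≠ 0) (hs : η + nrm q ≠ 0) (j : Fin N) :
    HasDerivAt (fun t => RL η k i (q, Function.update p j t))
      (q j * p i + (if j = i then (∑ m, q m * p m) else 0) - 2 * q i * p j
        + q i * η * p j / (η + nrm q)) (p j) := by
  have hr := (nrm_pos hq).ne'
  have hH := hasDerivAt_Ham_p η k q p hs j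
  have h3 : HasDerivAt (fun t => q i / nrm q * (η * Ham η k (q, Function.update p j t) + k))
      (q i / nrm q * (η * (nrm q * p j / (η + nrm q)))) (p j) := by
    exact ((hH.const_mul η).add_const k).const_mul (q i / nrm q)
  by_cases hji : j = i
  · subst hji
    have hfun : (fun t => RL η k j (q, Function.update p j t))
        = fun t => (t * q j + (∑ m, q m * p m - q j * p j)) * t
            - q j * (t ^ 2 + (∑ m, p m ^ 2 - p j ^ 2))
            + q j / nrm q * (η * Ham η k (q, Function.update p j t) + k) := by
      funext t
      rw [RL_eq]
      simp only [sum_mul_update, sum_update_sq, Function.update_self]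
    rw [hfun]
    have h1 : HasDerivAt (fun t : ℝ => (t * q j + (∑ m, q m * p m - q j * p j)) * t)
        ((1 * q j) * p j + (p j * q j + (∑ m, q m * p m - q j * p j)) * 1) (p j) :=
      (((hasDerivAt_id (p j)).mul_const (q j)).add_const _).mul (hasDerivAt_id (p j))
    have h2 : HasDerivAt (fun t : ℝ => q j * (t ^ 2 + (∑ m, p m ^ 2 - p j ^ 2)))
        (q j * (2 * p j)) (p j) := by
      have hb : HasDerivAt (fun t : ℝ => t ^ 2 + (∑ m, p m ^ 2 - p j ^ 2)) (2 * p j) (p j) := by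
        simpa using (hasDerivAt_pow 2 (p j)).add_const (∑ m, p m ^ 2 - p j ^ 2)
      exact hb.const_mul (q j)
    have := (h1.sub h2).add h3
    refine this.congr_deriv ?_
    simp only [if_pos]
    field_simp
    ring
  · have hfun : (fun t => RL η k i (q, Function.update p j t))
        = fun t => (t * q j + (∑ m, q m * p m - q j * p j)) * p i
            - q i * (t ^ 2 + (∑ m, p m ^ 2 - p j ^ 2))
            + q i / nrm q * (η * Ham η k (q, Function.update p j t) + k) := by
      funext t
      rw [RL_eq]
      simp only [sum_mul_update, sum_update_sq, Function.update_of_ne (Ne.symm hji)]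
    rw [hfun]
    have h1 : HasDerivAt (fun t : ℝ => (t * q j + (∑ m, q m * p m - q j * p j)) * p i)
        ((1 * q j) * p i) (p j) :=
      (((hasDerivAt_id (p j)).mul_const (q j)).add_const _).mul_const (p i)
    have h2 : HasDerivAt (fun t : ℝ => q i * (t ^ 2 + (∑ m, p m ^ 2 - p j ^ 2)))
        (q i * (2 * p j)) (p j) := by
      have hb : HasDerivAt (fun t : ℝ => t ^ 2 + (∑ m, p m ^ 2 - p j ^ 2)) (2 * p j) (p j) := by
        simpa using (hasDerivAt_pow 2 (p j)).add_const (∑ m, p m ^ 2 - p j ^ 2)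
      exact hb.const_mul (q i)
    have := (h1.sub h2).add h3
    refine this.congr_deriv ?_
    simp only [if_neg hji]
    field_simp
    ring

lemma hasDerivAt_RL_q {N : ℕ} (η k : ℝ) (i : Fin N) {q : Fin N → ℝ} (p : Fin N → ℝ)
    (hq : q ≠ 0) (hs : η + nrm q ≠ 0) (j : Fin N) :
    HasDerivAt (fun t => RL η k i (Function.update q j t, p))
      (p j * p i
        + (if j = i then (-(∑ m, p m ^ 2) + (η * (∑ m, p m ^ 2) + 2 * k) / (2 * (η + nrm q)))
            else 0)
        - q i * q j * (η * (∑ m, p m ^ 2) + 2 * k) / (2 * nrm q * (η + nrm q) ^ 2)) (q j) := by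
  have hr := (nrm_pos hq).ne'
  have hN := hasDerivAt_nrm_update hq j
  have hNval : nrm (Function.update q j (q j)) = nrm q := by rw [Function.update_eq_self]
  have hNne : nrm (Function.update q j (q j)) ≠ 0 := by rw [hNval]; exact hr
  have hH := hasDerivAt_Ham_q η k p hq hs j
  have hv : HasDerivAt (fun t => η * Ham η k (Function.update q j t, p) + k)
      (η * (q j * (η * (∑ m, p m ^ 2) + 2 * k) / (2 * nrm q * (η + nrm q) ^ 2))) (q j) :=
    (hH.const_mul η).add_const k
  have hHamval : Ham η k (Function.update q j (q j), p)
      = nrm q * (∑ m, p m ^ 2) / (2 * (η + nrm q)) - k / (η + nrm q) := by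
    rw [Ham]; simp [Function.update_eq_self]
  by_cases hji : j = i
  · subst hji
    have hfun : (fun t => RL η k j (Function.update q j t, p))
        = fun t => (t * p j + (∑ m, q m * p m - q j * p j)) * p j
            - t * (∑ m, p m ^ 2)
            + t / nrm (Function.update q j t) * (η * Ham η k (Function.update q j t, p) + k) := by
      funext t
      rw [RL_eq]
      simp only [sum_update_mul, Function.update_self]
    rw [hfun]
    have h1 : HasDerivAt (fun t : ℝ => (t * p j + (∑ m, q m * p m - q j * p j)) * p j)
        ((1 * p j) * p j) (q j) :=
      (((hasDerivAt_id (q j)).mul_const (p j)).add_const _).mul_const (p j)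
    have h2 : HasDerivAt (fun t : ℝ => t * (∑ m, p m ^ 2)) (1 * (∑ m, p m ^ 2)) (q j) :=
      (hasDerivAt_id (q j)).mul_const _
    have h3 : HasDerivAt (fun t => t / nrm (Function.update q j t) *
        (η * Ham η k (Function.update q j t, p) + k))
        (((1 * nrm (Function.update q j (q j)) - q j * (q j / nrm q)) /
            nrm (Function.update q j (q j)) ^ 2) *
          (η * Ham η k (Function.update q j (q j), p) + k)
          + (q j / nrm (Function.update q j (q j))) *
            (η * (q j * (η * (∑ m, p m ^ 2) + 2 * k) / (2 * nrm q * (η + nrm q) ^ 2)))) (q j) :=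
      ((hasDerivAt_id (q j)).div hN hNne).mul hv
    have := (h1.sub h2).add h3
    refine this.congr_deriv ?_
    simp only [if_pos, hNval, hHamval]
    field_simp
    ring
  · have hfun : (fun t => RL η k i (Function.update q j t, p))
        = fun t => (t * p j + (∑ m, q m * p m - q j * p j)) * p i
            - q i * (∑ m, p m ^ 2)
            + q i / nrm (Function.update q j t) *
                (η * Ham η k (Function.update q j t, p) + k) := by
      funext t
      rw [RL_eq]
      simp only [sum_update_mul, Function.update_of_ne (Ne.symm hji)]
    rw [hfun]
    have h1 : HasDerivAt (fun t : ℝ => (t * p j + (∑ m, q m * p m - q j * p j)) * p i)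
        ((1 * p j) * p i) (q j) :=
      (((hasDerivAt_id (q j)).mul_const (p j)).add_const _).mul_const (p i)
    have h3 : HasDerivAt (fun t => q i / nrm (Function.update q j t) *
        (η * Ham η k (Function.update q j t, p) + k))
        (((0 * nrm (Function.update q j (q j)) - q i * (q j / nrm q)) /
            nrm (Function.update q j (q j)) ^ 2) *
          (η * Ham η k (Function.update q j (q j), p) + k)
          + (q i / nrm (Function.update q j (q j))) *
            (η * (q j * (η * (∑ m, p m ^ 2) + 2 * k) / (2 * nrm q * (η + nrm q) ^ 2)))) (q j) :=
      ((hasDerivAt_const (q j) (q i)).div hN hNne).mul hv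
    have := (h1.sub_const (q i * (∑ m, p m ^ 2))).add h3
    refine this.congr_deriv ?_
    simp only [if_neg hji, hNval, hHamval]
    field_simp
    ring

/- degenerate case η + |q| = 0 -/

lemma deriv_Ham_q_degenerate {N : ℕ} (η k : ℝ) {q : Fin N → ℝ} (p : Fin N → ℝ)
    (hq : q ≠ 0) (hs : η + nrm q = 0) (j : Fin N) :
    deriv (fun t => Ham η k (Function.update q j t, p)) (q j) = 0 := by
  set A := ∑ m, p m ^ 2 with hA
  by_cases hAk : A = 0 ∧ k = 0
  · have hfun : (fun t => Ham η k (Function.update q j t, p)) = fun _ => 0 := by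
      funext t
      rw [Ham]
      simp [← hA, hAk.1, hAk.2]
    rw [hfun]
    simp
  · apply deriv_zero_of_not_differentiableAt
    intro hd
    have hval : Ham η k (Function.update q j (q j), p) = 0 := by
      rw [Function.update_eq_self, Ham]
      simp [hs]
    have hcont : Tendsto (fun t => Ham η k (Function.update q j t, p)) (nhdsWithin (q j) {(q j)}ᶜ) (nhds 0) := by
      have := hd.continuousAt.tendsto
      rw [hval] at this
      exact this.mono_left nhdsWithin_le_nhds
    have hNfun : (fun t => nrm (Function.update q j t))
        = fun t => Real.sqrt (t ^ 2 + (∑ m, q m ^ 2 - q j ^ 2)) := by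
      funext t; rw [nrm, sum_update_sq]
    have hccont : Continuous (fun t : ℝ => η + Real.sqrt (t ^ 2 + (∑ m, q m ^ 2 - q j ^ 2))) := by
      continuity
    have hNtend : Tendsto (fun t => η + nrm (Function.update q j t))
        (nhdsWithin (q j) {(q j)}ᶜ) (nhds 0) := by
      have h0 : η + nrm (Function.update q j (q j)) = 0 := by
        rw [Function.update_eq_self]; exact hs
      have hc2 : Continuous fun t => η + nrm (Function.update q j t) := by
        have : (fun t => η + nrm (Function.update q j t))
            = fun t : ℝ => η + Real.sqrt (t ^ 2 + (∑ m, q m ^ 2 - q j ^ 2)) := by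
          funext t; rw [nrm, sum_update_sq]
        rw [this]; exact hccont
      have h2 := hc2.continuousAt.tendsto (x := q j)
      rw [h0] at h2
      exact h2.mono_left nhdsWithin_le_nhds
    have hcnn : 0 ≤ ∑ m, q m ^ 2 - q j ^ 2 := by
      have h := Finset.single_le_sum (f := fun m => q m ^ 2)
        (fun m _ => sq_nonneg (q m)) (Finset.mem_univ j)
      linarith
    have hev : ∀ᶠ t in nhdsWithin (q j) {(q j)}ᶜ, η + nrm (Function.update q j t) ≠ 0 := by
      have h1 : ∀ᶠ t in nhdsWithin (q j) {(q j)}ᶜ, t ≠ q j := eventually_mem_nhdsWithin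
      have h2 : ∀ᶠ t in nhdsWithin (q j) {(q j)}ᶜ, t ≠ -(q j) := by
        by_cases h0 : q j = 0
        · rw [h0, neg_zero]
          simpa [h0] using h1
        · have : (q j : ℝ) ≠ -(q j) := by
            intro h; apply h0; linarith
          exact (eventually_ne_nhds this).filter_mono nhdsWithin_le_nhds
      filter_upwards [h1, h2] with t ht1 ht2 hcontra
      have hNt : nrm (Function.update q j t) = nrm q := by linarith [hs, hcontra]
      have hsq : t ^ 2 + (∑ m, q m ^ 2 - q j ^ 2) = ∑ m, q m ^ 2 := by
        calc t ^ 2 + (∑ m, q m ^ 2 - q j ^ 2) = nrm (Function.update q j t) ^ 2 := by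
              rw [sq_nrm, sum_update_sq]
          _ = nrm q ^ 2 := by rw [hNt]
          _ = ∑ m, q m ^ 2 := sq_nrm q
      have ht2' : (t - q j) * (t + q j) = 0 := by nlinarith [hsq]
      rcases mul_eq_zero.mp ht2' with h | h
      · exact ht1 (by linarith)
      · exact ht2 (by linarith)
    have hprod : Tendsto (fun t => (A / 2 - Ham η k (Function.update q j t, p)) *
        (2 * (η + nrm (Function.update q j t)))) (nhdsWithin (q j) {(q j)}ᶜ)
        (nhds ((A / 2 - 0) * (2 * 0))) :=
      (tendsto_const_nhds.sub hcont).mul (hNtend.const_mul 2)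
    have heq : ∀ᶠ t in nhdsWithin (q j) {(q j)}ᶜ,
        (A / 2 - Ham η k (Function.update q j t, p)) *
          (2 * (η + nrm (Function.update q j t))) = η * A + 2 * k := by
      filter_upwards [hev] with t ht
      rw [Ham]
      simp only [← hA]
      field_simp
      ring
    have hκ : η * A + 2 * k = 0 := by
      have h2 := hprod.congr' heq
      have := tendsto_nhds_unique h2 tendsto_const_nhds
      simpa using this.symm
    have hev2 : ∀ᶠ t in nhdsWithin (q j) {(q j)}ᶜ,
        Ham η k (Function.update q j t, p) = A / 2 := by
      filter_upwards [hev] with t ht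
      rw [Ham]
      simp only [← hA]
      field_simp
      linear_combination (-1) * hκ
    have hA2 : A / 2 = 0 := tendsto_nhds_unique ((hcont.congr' hev2)) tendsto_const_nhds |>.symm
    have hA0 : A = 0 := by linarith
    have hk0 : k = 0 := by
      rw [hA0] at hκ; linarith
    exact hAk ⟨hA0, hk0⟩

lemma deriv_Ham_p_degenerate {N : ℕ} (η k : ℝ) (q : Fin N → ℝ) (p : Fin N → ℝ)
    (hs : η + nrm q = 0) (j : Fin N) :
    deriv (fun t => Ham η k (q, Function.update p j t)) (p j) = 0 := by
  have hfun : (fun t => Ham η k (q, Function.update p j t)) = fun _ => 0 := by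
    funext t
    rw [Ham]
    simp [hs]
  rw [hfun]
  simp

set_option maxHeartbeats 1000000 in
/-- Each component of the deformed Runge–Lenz vector Poisson-commutes with
the deformed Coulomb Hamiltonian on (ℝᴺ∖{0}) × ℝᴺ. -/
theorem runge_lenz_commutes {N : ℕ} (η k : ℝ) (i : Fin N)
    (x : (Fin N → ℝ) × (Fin N → ℝ)) (hx : x.1 ≠ 0) :
    pbracket (Ham η k) (RL η k i) x = 0 := by
  obtain ⟨q, p⟩ := x
  have hq : q ≠ 0 := hx
  rw [pbracket]
  by_cases hs : η + nrm q = 0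
  · apply Finset.sum_eq_zero
    intro j _
    have h1 := deriv_Ham_q_degenerate η k p hq hs j
    have h2 := deriv_Ham_p_degenerate η k q p hs j
    simp only at h1 h2 ⊢
    rw [h1, h2]
    ring
  · have hr := (nrm_pos hq).ne'
    set A := ∑ m, p m ^ 2 with hA
    set B := ∑ m, q m * p m with hB
    set r := nrm q with hrdef
    set s := η + r with hsdef
    set κ := η * A + 2 * k with hκ
    clear_value κ
    clear_value s
    clear_value r
    clear_value B
    clear_value A
    have hs' : η + nrm q ≠ 0 := by rw [← hrdef, ← hsdef]; exact hs
    have key : ∀ j : Fin N,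
        (deriv (fun t => Ham η k (Function.update q j t, p)) (q j) *
            deriv (fun t => RL η k i (q, Function.update p j t)) (p j) -
          deriv (fun t => Ham η k (q, Function.update p j t)) (p j) *
            deriv (fun t => RL η k i (Function.update q j t, p)) (q j))
        = (p i * κ / (2 * r * s ^ 2)) * q j ^ 2
          + (q i * κ * (η - 2 * s) / (2 * r * s ^ 3) + q i * κ / (2 * s ^ 3)) * (q j * p j)
          + (-(r * p i) / s) * p j ^ 2
          + (if j = i then
              (q i * κ / (2 * r * s ^ 2)) * B - (r * p i / s) * (-A + κ / (2 * s)) else 0) := by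
      intro j
      rw [(hasDerivAt_Ham_q η k p hq hs' j).deriv, (hasDerivAt_Ham_p η k q p hs' j).deriv,
        (hasDerivAt_RL_p η k i p hq hs' j).deriv, (hasDerivAt_RL_q η k i p hq hs' j).deriv]
      by_cases hji : j = i
      · subst hji
        simp only [if_pos, ← hA, ← hB, ← hrdef]
        simp only [← hsdef, ← hκ]
        field_simp
        ring
      · simp only [if_neg hji, ← hA, ← hB, ← hrdef]
        simp only [← hsdef, ← hκ]
        field_simp
        ring
    rw [Finset.sum_congr rfl fun j _ => key j]
    rw [Finset.sum_add_distrib, Finset.sum_add_distrib, Finset.sum_add_distrib,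
      ← Finset.mul_sum, ← Finset.mul_sum, ← Finset.mul_sum, Finset.sum_ite_eq']
    simp only [Finset.mem_univ, if_pos]
    have hq2 : ∑ j, q j ^ 2 = r ^ 2 := by rw [hrdef]; exact (sq_nrm q).symm
    have hqp : ∑ j, q j * p j = B := by
      rw [hB]
    have hp2 : ∑ j, p j ^ 2 = A := by rw [hA]
    rw [hq2, hqp, hp2]
    rw [hsdef] at hs ⊢
    field_simp
    ring
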